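/- Define g : [0, π) → [0, π) by g(z) = arccos( ((π − z) cos z + sin z)/π ), let g^l be the l-fold iterate of g (g^0 = identity), and for an integer L ≥ 0 define F_L(θ) = (1/(L+1)) Σ_{l=0}^{L} [ cos(g^l(θ)) · Π_{l'=l}^{L−1} (1 − g^{l'}(θ)/π) ] (empty product equal to 1). Then for all integers L_1 > L_2 ≥ 0 there exists δ > 0 such that for all θ ∈ (0, δ): F_{L_1}(θ) < F_{L_2}(θ). -/

import Mathlib

/-- The layer-to-layer embedding-angle map of an infinitely wide ReLU network:
`g z = arccos(((π − z) cos z + sin z)/π)`. -/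
noncomputable def g (z : ℝ) : ℝ :=
  Real.arccos (((Real.pi - z) * Real.cos z + Real.sin z) / Real.pi)

/-- The cosine of the model-gradient angle of an infinitely wide depth-`L` ReLU network
(Theorem 4.3 of the paper):
`F L θ = (1/(L+1)) ∑_{l=0}^{L} cos (g^[l] θ) ∏_{l'=l}^{L−1} (1 − g^[l'] θ / π)`,
with the empty product equal to `1`. -/
noncomputable def F (L : ℕ) (θ : ℝ) : ℝ :=
  (1 / ((L : ℝ) + 1)) * ∑ l ∈ Finset.range (L + 1),
    Real.cos (g^[l] θ) * ∏ l' ∈ Finset.Ico l L, (1 - g^[l'] θ / Real.pi)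

open Real Filter Set Topology

noncomputable def hfun (z : ℝ) : ℝ := ((Real.pi - z) * Real.cos z + Real.sin z) / Real.pi

lemma g_eq (z : ℝ) : g z = Real.arccos (hfun z) := rfl

lemma hfun_pos {z : ℝ} (hz : z ∈ Set.Ioo (0:ℝ) 1) : 0 < hfun z := by
  obtain ⟨h0, h1⟩ := hz
  have hπ : (1:ℝ) < Real.pi := by linarith [Real.pi_gt_three]
  have hc : 0 < Real.cos z := by
    have := Real.one_sub_sq_div_two_le_cos (x := z)
    nlinarith
  have hs : 0 < Real.sin z := Real.sin_pos_of_pos_of_lt_pi h0 (by linarith)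
  have : 0 < (Real.pi - z) * Real.cos z + Real.sin z := by nlinarith
  exact div_pos this (by positivity)

lemma hfun_lt_one {z : ℝ} (hz : z ∈ Set.Ioo (0:ℝ) 1) : hfun z < 1 := by
  obtain ⟨h0, h1⟩ := hz
  have hπ : (1:ℝ) < Real.pi := by linarith [Real.pi_gt_three]
  have hs : Real.sin z < z := Real.sin_lt h0
  have hc : Real.cos z ≤ 1 := Real.cos_le_one z
  have : (Real.pi - z) * Real.cos z + Real.sin z < Real.pi := by nlinarith
  rw [hfun, div_lt_one (by positivity)]
  exact this

lemma cos_lt_hfun {z : ℝ} (hz : z ∈ Set.Ioo (0:ℝ) 1) : Real.cos z < hfun z := by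
  obtain ⟨h0, h1⟩ := hz
  have hπ : (1:ℝ) < Real.pi := by linarith [Real.pi_gt_three]
  have hz2 : z < Real.pi / 2 := by linarith [Real.pi_gt_three]
  have ht : z < Real.tan z := Real.lt_tan h0 hz2
  have hc : 0 < Real.cos z := Real.cos_pos_of_mem_Ioo ⟨by linarith, hz2⟩
  have hzc : z * Real.cos z < Real.sin z := by
    have := (mul_lt_mul_of_pos_right ht hc)
    rwa [Real.tan_mul_cos hc.ne'] at this
  rw [hfun, lt_div_iff₀ Real.pi_pos]
  nlinarith

lemma g_mem {z : ℝ} (hz : z ∈ Set.Ioo (0:ℝ) 1) : g z ∈ Set.Ioo 0 z := by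
  have h1 := hfun_lt_one hz
  have h0 := hfun_pos hz
  constructor
  · rw [g_eq]; exact Real.arccos_pos.2 h1
  · have : Real.arccos (hfun z) < Real.arccos (Real.cos z) := by
      apply Real.strictAntiOn_arccos _ _ (cos_lt_hfun hz)
      · exact ⟨Real.neg_one_le_cos z, Real.cos_le_one z⟩
      · exact ⟨by linarith [hfun_pos hz], (hfun_lt_one hz).le⟩
    rwa [Real.arccos_cos hz.1.le (by nlinarith [Real.pi_gt_three, hz.2])] at this

lemma cos_g {z : ℝ} (hz : z ∈ Set.Ioo (0:ℝ) 1) : Real.cos (g z) = hfun z := by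
  rw [g_eq]
  exact Real.cos_arccos (by linarith [hfun_pos hz]) (hfun_lt_one hz).le

lemma iter_mem {z : ℝ} (hz : z ∈ Set.Ioo (0:ℝ) 1) (l : ℕ) :
    g^[l] z ∈ Set.Ioo (0:ℝ) 1 ∧ g^[l] z ≤ z := by
  induction l with
  | zero => exact ⟨hz, le_refl z⟩
  | succ n ih =>
    rw [Function.iterate_succ_apply']
    obtain ⟨hm, hle⟩ := ih
    have := g_mem hm
    exact ⟨⟨this.1, lt_trans this.2 hm.2⟩, le_trans this.2.le hle⟩


theorem tendsto_sin_div : Tendsto (fun x : ℝ => Real.sin x / x) (𝓝[≠] 0) (𝓝 1) := by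
  have h := hasDerivAt_iff_tendsto_slope.1 (Real.hasDerivAt_sin 0)
  simp only [Real.cos_zero, slope_fun_def_field, Real.sin_zero, sub_zero] at h
  exact h

theorem tendsto_div_sin : Tendsto (fun x : ℝ => x / Real.sin x) (𝓝[≠] 0) (𝓝 1) := by
  have h := tendsto_sin_div.inv₀ one_ne_zero
  simpa [inv_div] using h

theorem tendsto_A : Tendsto (fun w : ℝ => w^2 / (2*(1 - Real.cos w))) (𝓝[≠] 0) (𝓝 1) := by
  have hcomp : Tendsto (fun w : ℝ => w/2) (𝓝[≠] (0:ℝ)) (𝓝[≠] 0) := by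
    apply tendsto_nhdsWithin_of_tendsto_nhds_of_eventually_within
    · have := (tendsto_id.div_const 2 : Tendsto (fun w : ℝ => w/2) (𝓝 (0:ℝ)) (𝓝 (0/2)))
      simpa using this.mono_left nhdsWithin_le_nhds
    · filter_upwards [self_mem_nhdsWithin] with w hw
      simpa using div_ne_zero hw two_ne_zero
  have h1 : Tendsto (fun x : ℝ => (x / Real.sin x)^2) (𝓝[≠] 0) (𝓝 1) := by
    simpa using tendsto_div_sin.pow 2
  have h2 := h1.comp hcomp
  refine h2.congr' ?_
  filter_upwards [self_mem_nhdsWithin] with w hw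
  have hid : 1 - Real.cos w = 2 * Real.sin (w/2)^2 := by
    have := Real.sin_sq_eq_half_sub (w/2)
    have h2w : 2 * (w/2) = w := by ring
    rw [h2w] at this
    linarith
  rw [Function.comp_apply, hid]
  rcases eq_or_ne (Real.sin (w/2)) 0 with hs | hs
  · simp [hs, div_pow]
  · field_simp

lemma Ioi_le_ne : (𝓝[>] (0:ℝ)) ≤ 𝓝[≠] 0 :=
  nhdsWithin_mono 0 (fun x hx => ne_of_gt hx)

lemma Ioo_mem : Set.Ioo (0:ℝ) 1 ∈ 𝓝[>] (0:ℝ) :=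
  Ioo_mem_nhdsGT zero_lt_one

lemma zcos_lt_sin {z : ℝ} (hz : z ∈ Set.Ioo (0:ℝ) 1) : z * Real.cos z < Real.sin z := by
  obtain ⟨h0, h1⟩ := hz
  have hz2 : z < Real.pi / 2 := by linarith [Real.pi_gt_three]
  have ht : z < Real.tan z := Real.lt_tan h0 hz2
  have hc : 0 < Real.cos z := Real.cos_pos_of_mem_Ioo ⟨by linarith, hz2⟩
  have := mul_lt_mul_of_pos_right ht hc
  rwa [Real.tan_mul_cos hc.ne'] at this

lemma tendsto_c1 : Tendsto (fun z : ℝ => 2*(1 - Real.cos z)/z^2) (𝓝[>] 0) (𝓝 1) := by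
  have h := (tendsto_A.mono_left Ioi_le_ne).inv₀ one_ne_zero
  rw [inv_one] at h
  refine h.congr' ?_
  filter_upwards with z
  rw [inv_div]

lemma tendsto_c2 : Tendsto (fun z : ℝ => (z * Real.cos z - Real.sin z)/z^2) (𝓝[>] 0) (𝓝 0) := by
  have hlow : Tendsto (fun z : ℝ => -z/2) (𝓝[>] (0:ℝ)) (𝓝 0) := by
    have := (tendsto_id.neg.div_const 2 : Tendsto (fun z : ℝ => -z/2) (𝓝 (0:ℝ)) (𝓝 (-0/2)))
    simpa using this.mono_left nhdsWithin_le_nhds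
  apply tendsto_of_tendsto_of_tendsto_of_le_of_le' hlow tendsto_const_nhds
  · filter_upwards [Ioo_mem] with z hz
    have h0 := hz.1
    have hc := Real.one_sub_sq_div_two_le_cos (x := z)
    have hs := Real.sin_le h0.le
    rw [le_div_iff₀ (by positivity)]
    nlinarith [hz.2]
  · filter_upwards [Ioo_mem] with z hz
    exact div_nonpos_of_nonpos_of_nonneg (by linarith [zcos_lt_sin hz]) (by positivity)

lemma tendsto_B : Tendsto (fun z : ℝ => 2*(1 - hfun z)/z^2) (𝓝[>] 0) (𝓝 1) := by
  have h := tendsto_c1.add (tendsto_c2.const_mul (2/Real.pi))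
  rw [mul_zero, add_zero] at h
  refine h.congr' ?_
  filter_upwards [self_mem_nhdsWithin] with z hz
  have hπ := Real.pi_ne_zero
  have hzne : z ≠ 0 := ne_of_gt hz
  rw [hfun]
  field_simp
  ring

lemma tendsto_g_zero : Tendsto g (𝓝[>] (0:ℝ)) (𝓝[>] 0) := by
  apply tendsto_nhdsWithin_of_tendsto_nhds_of_eventually_within
  · apply squeeze_zero' ?_ ?_ (tendsto_nhdsWithin_of_tendsto_nhds tendsto_id)
    · filter_upwards [Ioo_mem] with z hz; exact (g_mem hz).1.le
    · filter_upwards [Ioo_mem] with z hz; exact (g_mem hz).2.le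
  · filter_upwards [Ioo_mem] with z hz; exact (g_mem hz).1

lemma tendsto_g_ratio : Tendsto (fun z : ℝ => g z / z) (𝓝[>] 0) (𝓝 1) := by
  have hsq : Tendsto (fun z : ℝ => (g z / z)^2) (𝓝[>] 0) (𝓝 1) := by
    have hA := (tendsto_A.mono_left Ioi_le_ne).comp tendsto_g_zero
    have h := hA.mul tendsto_B
    rw [mul_one] at h
    refine h.congr' ?_
    filter_upwards [Ioo_mem] with z hz
    have hg := g_mem hz
    have h1 : Real.cos (g z) = hfun z := cos_g hz
    have h2 : (0:ℝ) < 1 - hfun z := by linarith [hfun_lt_one hz]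
    have hzne : z ≠ 0 := ne_of_gt hz.1
    rw [Function.comp_apply, h1, div_pow]
    field_simp
  have h := (Real.continuous_sqrt.tendsto 1).comp hsq
  rw [Real.sqrt_one] at h
  refine h.congr' ?_
  filter_upwards [Ioo_mem] with z hz
  have hg := g_mem hz
  have hgz : 0 ≤ g z / z := div_nonneg (g_mem hz).1.le hz.1.le
  rw [Function.comp_apply, Real.sqrt_sq hgz]

lemma tendsto_iter_zero (l : ℕ) : Tendsto (g^[l]) (𝓝[>] (0:ℝ)) (𝓝[>] 0) := by
  apply tendsto_nhdsWithin_of_tendsto_nhds_of_eventually_within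
  · apply squeeze_zero' ?_ ?_ (tendsto_nhdsWithin_of_tendsto_nhds tendsto_id)
    · filter_upwards [Ioo_mem] with z hz; exact (iter_mem hz l).1.1.le
    · filter_upwards [Ioo_mem] with z hz; exact (iter_mem hz l).2
  · filter_upwards [Ioo_mem] with z hz; exact (iter_mem hz l).1.1

lemma tendsto_iter_ratio (l : ℕ) :
    Tendsto (fun z : ℝ => g^[l] z / z) (𝓝[>] 0) (𝓝 1) := by
  induction l with
  | zero =>
    apply tendsto_const_nhds.congr'
    filter_upwards [self_mem_nhdsWithin] with z hz
    simp [div_self (ne_of_gt (Set.mem_Ioi.mp hz))]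
  | succ n ih =>
    have h1 := tendsto_g_ratio.comp (tendsto_iter_zero n)
    have h := h1.mul ih
    rw [mul_one] at h
    refine h.congr' ?_
    filter_upwards [Ioo_mem] with z hz
    have hm := (iter_mem hz n).1
    rw [Function.comp_apply, Function.iterate_succ_apply']
    rw [div_mul_div_comm, mul_comm (g^[n] z) z, mul_div_mul_right _ _ (ne_of_gt hm.1)]

lemma tendsto_iter_zero' (l : ℕ) : Tendsto (g^[l]) (𝓝[>] (0:ℝ)) (𝓝 0) :=
  (tendsto_iter_zero l).mono_right nhdsWithin_le_nhds

lemma tendsto_one_sub_iter (l : ℕ) :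
    Tendsto (fun z : ℝ => 1 - g^[l] z / Real.pi) (𝓝[>] 0) (𝓝 1) := by
  have h := (tendsto_const_nhds : Tendsto (fun _ : ℝ => (1:ℝ)) (𝓝[>] 0) (𝓝 1)).sub
    ((tendsto_iter_zero' l).div_const Real.pi)
  simpa using h

lemma tendsto_prod (s : Finset ℕ) :
    Tendsto (fun z : ℝ => ((∏ i ∈ s, (1 - g^[i] z / Real.pi)) - 1)/z) (𝓝[>] 0)
      (𝓝 (-(s.card : ℝ)/Real.pi)) := by
  induction s using Finset.induction_on with
  | empty => simpa using (tendsto_const_nhds : Tendsto (fun _ : ℝ => (0:ℝ)) (𝓝[>] 0) (𝓝 0))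
  | @insert a s ha ih =>
    have h1 : Tendsto (fun z : ℝ => (1 - g^[a] z / Real.pi) *
        (((∏ i ∈ s, (1 - g^[i] z / Real.pi)) - 1)/z) + (g^[a] z / z) * (-(1/Real.pi)))
        (𝓝[>] 0) (𝓝 (1 * (-(s.card : ℝ)/Real.pi) + 1 * (-(1/Real.pi)))) :=
      ((tendsto_one_sub_iter a).mul ih).add ((tendsto_iter_ratio a).mul tendsto_const_nhds)
    have hval : (1 * (-(s.card : ℝ)/Real.pi) + 1 * (-(1/Real.pi)))
        = -(((insert a s).card : ℝ))/Real.pi := by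
      rw [Finset.card_insert_of_notMem ha]
      push_cast
      field_simp
      ring
    rw [hval] at h1
    refine h1.congr' ?_
    filter_upwards with z
    rw [Finset.prod_insert ha]
    ring

lemma tendsto_prod_one (s : Finset ℕ) :
    Tendsto (fun z : ℝ => ∏ i ∈ s, (1 - g^[i] z / Real.pi)) (𝓝[>] 0) (𝓝 1) := by
  have hz : Tendsto (fun z : ℝ => z) (𝓝[>] (0:ℝ)) (𝓝 0) := tendsto_id.mono_left nhdsWithin_le_nhds
  have h := (tendsto_const_nhds : Tendsto (fun _ : ℝ => (1:ℝ)) (𝓝[>] 0) (𝓝 1)).add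
    (hz.mul (tendsto_prod s))
  rw [zero_mul, add_zero] at h
  refine h.congr' ?_
  filter_upwards [self_mem_nhdsWithin] with z hzz
  rw [mul_div_cancel₀ _ (ne_of_gt (hzz : (0:ℝ) < z))]
  ring

lemma tendsto_cos_iter (l : ℕ) :
    Tendsto (fun z : ℝ => Real.cos (g^[l] z)) (𝓝[>] 0) (𝓝 1) := by
  have h := (Real.continuous_cos.tendsto 0).comp (tendsto_iter_zero' l)
  simpa [Function.comp_def] using h

lemma tendsto_cos_term (l : ℕ) :
    Tendsto (fun z : ℝ => (Real.cos (g^[l] z) - 1)/z) (𝓝[>] 0) (𝓝 0) := by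
  have hlow : Tendsto (fun z : ℝ => -z/2) (𝓝[>] (0:ℝ)) (𝓝 0) := by
    have := (tendsto_id.neg.div_const 2 : Tendsto (fun z : ℝ => -z/2) (𝓝 (0:ℝ)) (𝓝 (-0/2)))
    simpa using this.mono_left nhdsWithin_le_nhds
  apply tendsto_of_tendsto_of_tendsto_of_le_of_le' hlow tendsto_const_nhds
  · filter_upwards [Ioo_mem] with z hz
    obtain ⟨⟨hw0, _⟩, hwz⟩ := iter_mem hz l
    have hc := Real.one_sub_sq_div_two_le_cos (x := g^[l] z)
    rw [le_div_iff₀ hz.1]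
    nlinarith
  · filter_upwards [Ioo_mem] with z hz
    exact div_nonpos_of_nonpos_of_nonneg (by linarith [Real.cos_le_one (g^[l] z)]) hz.1.le

lemma tendsto_term (L l : ℕ) (hl : l ≤ L) :
    Tendsto (fun z : ℝ =>
      (Real.cos (g^[l] z) * (∏ l' ∈ Finset.Ico l L, (1 - g^[l'] z / Real.pi)) - 1)/z)
      (𝓝[>] 0) (𝓝 (-((L:ℝ) - l)/Real.pi)) := by
  have h := ((tendsto_cos_iter l).mul (tendsto_prod (Finset.Ico l L))).add (tendsto_cos_term l)
  have hcard : ((Finset.Ico l L).card : ℝ) = (L:ℝ) - l := by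
    rw [Nat.card_Ico]
    exact Nat.cast_sub hl
  rw [hcard] at h
  have hval : (1 * (-((L:ℝ) - l)/Real.pi) + 0) = -((L:ℝ) - l)/Real.pi := by ring
  rw [hval] at h
  refine h.congr' ?_
  filter_upwards with z
  ring

lemma tendsto_F (L : ℕ) :
    Tendsto (fun z : ℝ => (F L z - 1)/z) (𝓝[>] 0) (𝓝 (-(L:ℝ)/(2*Real.pi))) := by
  have hsum : Tendsto (fun z : ℝ => ∑ l ∈ Finset.range (L+1),
      (Real.cos (g^[l] z) * (∏ l' ∈ Finset.Ico l L, (1 - g^[l'] z / Real.pi)) - 1)/z)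
      (𝓝[>] 0) (𝓝 (∑ l ∈ Finset.range (L+1), -((L:ℝ) - l)/Real.pi)) := by
    apply tendsto_finset_sum
    intro l hl
    exact tendsto_term L l (Nat.lt_succ_iff.mp (Finset.mem_range.mp hl))
  have h := hsum.const_mul (1 / ((L:ℝ) + 1))
  have hπ := Real.pi_ne_zero
  have hL1 : ((L:ℝ) + 1) ≠ 0 := by positivity
  have hval : (1 / ((L:ℝ) + 1)) * (∑ l ∈ Finset.range (L+1), -((L:ℝ) - l)/Real.pi)
      = -(L:ℝ)/(2*Real.pi) := by
    have hid : (∑ i ∈ Finset.range (L+1), (i:ℝ)) = L*(L+1)/2 := by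
      have h2 := Finset.sum_range_id_mul_two (L+1)
      simp only [Nat.add_sub_cancel] at h2
      have h3 : ((∑ i ∈ Finset.range (L+1), i : ℕ) : ℝ) * 2 = ((L:ℝ)+1)*L := by
        exact_mod_cast h2
      push_cast at h3
      linarith
    have hrw : ∀ l ∈ Finset.range (L+1),
        -((L:ℝ) - l)/Real.pi = (l:ℝ) * (1/Real.pi) - (L:ℝ) * (1/Real.pi) := by
      intro l _; ring
    rw [Finset.sum_congr rfl hrw, Finset.sum_sub_distrib, ← Finset.sum_mul, hid,
      Finset.sum_const, Finset.card_range]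
    push_cast
    field_simp
    ring_nf
    field_simp
    ring
  rw [hval] at h
  refine h.congr' ?_
  filter_upwards [self_mem_nhdsWithin] with z hz
  have hzne : z ≠ 0 := ne_of_gt (hz : (0:ℝ) < z)
  rw [F, ← Finset.sum_div, Finset.sum_sub_distrib, Finset.sum_const, Finset.card_range,
    nsmul_eq_mul, mul_one]
  push_cast
  field_simp

/-- depth monotonicity of the better-separation property, a consequence
of Theorem 4.4 of the paper. For all integers `L₁ > L₂ ≥ 0` there exists `δ > 0` such
that for all `θ ∈ (0, δ)`: `F L₁ θ < F L₂ θ` (a deeper ReLU network produces a strictly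
larger model-gradient angle than a shallower one). -/
theorem F_depth_strict_mono (L₁ L₂ : ℕ) (h : L₂ < L₁) :
    ∃ δ > 0, ∀ θ ∈ Set.Ioo (0 : ℝ) δ, F L₁ θ < F L₂ θ := by
  have hd := (tendsto_F L₁).sub (tendsto_F L₂)
  have hd' : Tendsto (fun z : ℝ => (F L₁ z - F L₂ z)/z) (𝓝[>] 0)
      (𝓝 (-(L₁:ℝ)/(2*Real.pi) - -(L₂:ℝ)/(2*Real.pi))) := by
    refine hd.congr' ?_
    filter_upwards with z
    rw [div_sub_div_same, sub_sub_sub_cancel_right]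
  have hneg : (-(L₁:ℝ)/(2*Real.pi) - -(L₂:ℝ)/(2*Real.pi)) < 0 := by
    have hπ := Real.pi_pos
    have : (L₂:ℝ) < L₁ := by exact_mod_cast h
    rw [div_sub_div_same]
    apply div_neg_of_neg_of_pos (by linarith) (by linarith)
  have hev : ∀ᶠ z in 𝓝[>] (0:ℝ), F L₁ z < F L₂ z := by
    filter_upwards [hd'.eventually_lt_const hneg, self_mem_nhdsWithin] with z h1 h2
    have hz : (0:ℝ) < z := h2
    nlinarith [mul_neg_of_pos_of_neg hz h1, mul_div_cancel₀ (F L₁ z - F L₂ z) (ne_of_gt hz)]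
  rw [Filter.eventually_iff, mem_nhdsGT_iff_exists_Ioo_subset] at hev
  obtain ⟨u, hu, hsub⟩ := hev
  exact ⟨u, hu, fun θ hθ => hsub hθ⟩
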